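/- Let k₁, k₂, U : [0,∞) → [0,∞) be measurable and nonnegative, let μ₁, q₁, γ₁, γ₂, γ ≥ 0, and let s : [0,∞) → ℝ be measurable with 0 ≤ s(a) ≤ 1 for all a. Define R₀ = ∫₀^∞ k₂(x)U(x)e^{-γx} ( ∫₀ˣ γ₁ e^{(γ-(γ₁+γ₂))y} ( ∫₀^y q₁ e^{((γ₁+γ₂)-(μ₁+q₁))z} ( ∫₀^z k₁(a)e^{(μ₁+q₁)a} da ) dz ) dy ) dx + ∫₀^∞ k₂(x)U(x)e^{-γx} ( ∫₀ˣ μ₁ e^{(γ-(μ₁+q₁))z} ( ∫₀^z k₁(a)e^{(μ₁+q₁)a} da ) dz ) dx, and define I(s) = ∫₀^∞ s(a)k₁(a)e^{(μ₁+q₁)a} ( ∫ₐ^∞ q₁ e^{((γ₁+γ₂)-(μ₁+q₁))z} ( ∫_z^∞ γ₁ e^{(γ-(γ₁+γ₂))y} ( ∫_y^∞ k₂(x)U(x)e^{-γx} dx ) dy ) dz ) da + ∫₀^∞ s(a)k₁(a)e^{(μ₁+q₁)a} ( ∫ₐ^∞ μ₁ e^{(γ-(μ₁+q₁))z} ( ∫_z^∞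 k₂(x)U(x)e^{-γx} dx ) dz ) da, both taken as iterated Lebesgue integrals with values in [0,∞]. Then I(s) ≤ R₀. -/
import Mathlib


open MeasureTheory
open scoped ENNReal

lemma swap_lem (f g : ℝ → ℝ≥0∞) (hf : Measurable f) (hg : Measurable g) :
    (∫⁻ x in Set.Ioi (0:ℝ), f x * ∫⁻ y in Set.Ioi x, g y)
      = ∫⁻ y in Set.Ioi (0:ℝ), g y * ∫⁻ x in Set.Ioc 0 y, f x := by
  set F : ℝ → ℝ → ℝ≥0∞ := fun x y => if 0 < x ∧ x < y then f x * g y else 0 with hF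
  have hmeas : Measurable (Function.uncurry F) := by
    apply Measurable.ite
    · exact (measurableSet_lt measurable_const measurable_fst).inter
        (measurableSet_lt measurable_fst measurable_snd)
    · exact (hf.comp measurable_fst).mul (hg.comp measurable_snd)
    · exact measurable_const
  have key := lintegral_lintegral_swap (μ := (volume : Measure ℝ))
    (ν := (volume : Measure ℝ)) hmeas.aemeasurable
  have h1 : (∫⁻ x, ∫⁻ y, F x y) = ∫⁻ x in Set.Ioi (0:ℝ), f x * ∫⁻ y in Set.Ioi x, g y := by
    rw [← lintegral_indicator measurableSet_Ioi]
    refine lintegral_congr fun x => ?_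
    by_cases hx : 0 < x
    · have : ∀ y, F x y = (Set.Ioi x).indicator (fun y => f x * g y) y := by
        intro y
        simp only [hF, Set.indicator_apply, Set.mem_Ioi, hx, true_and]
      simp only [this]
      rw [lintegral_indicator measurableSet_Ioi, lintegral_const_mul _ hg,
        Set.indicator_of_mem (Set.mem_Ioi.mpr hx)]
    · have : ∀ y, F x y = 0 := fun y => by simp [hF, hx]
      simp [this, Set.indicator_of_notMem (by simpa using hx : x ∉ Set.Ioi (0:ℝ))]
  have h2 : (∫⁻ y, ∫⁻ x, F x y) = ∫⁻ y in Set.Ioi (0:ℝ), g y * ∫⁻ x in Set.Ioc 0 y, f x := by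
    rw [← lintegral_indicator measurableSet_Ioi]
    refine lintegral_congr fun y => ?_
    by_cases hy : 0 < y
    · have : ∀ x, F x y = (Set.Ioo 0 y).indicator (fun x => f x * g y) x := by
        intro x
        simp only [hF, Set.indicator_apply, Set.mem_Ioo]
      simp only [this]
      rw [lintegral_indicator measurableSet_Ioo, lintegral_mul_const _ hf,
        Set.indicator_of_mem (Set.mem_Ioi.mpr hy)]
      rw [setLIntegral_congr (MeasureTheory.Ioo_ae_eq_Ioc (a := (0:ℝ)) (b := y)), mul_comm]
    · have : ∀ x, F x y = 0 := by
        intro x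
        simp only [hF, ite_eq_right_iff]
        rintro ⟨ha, hb⟩
        exact absurd (ha.trans hb) hy
      simp [this, Set.indicator_of_notMem (by simpa using hy : y ∉ Set.Ioi (0:ℝ))]
  rw [← h1, ← h2]
  exact key

lemma ioi_meas (φ : ℝ → ℝ≥0∞) : Measurable (fun z : ℝ => ∫⁻ y in Set.Ioi z, φ y) :=
  Antitone.measurable fun _ _ h => lintegral_mono_set (Set.Ioi_subset_Ioi h)

lemma ioc_meas (φ : ℝ → ℝ≥0∞) : Measurable (fun z : ℝ => ∫⁻ y in Set.Ioc 0 z, φ y) :=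
  Monotone.measurable fun _ _ h => lintegral_mono_set (Set.Ioc_subset_Ioc_right h)

/-- The coefficient `I(s)` appearing in the derivative of the Liapunov
function of the age-structured SEQIR model is bounded by the basic
reproduction number `R₀` whenever `0 ≤ s ≤ 1`; all integrals are iterated
Lebesgue integrals with values in `[0,∞]`. -/
theorem stmt_8 (k₁ k₂ U s : ℝ → ℝ) (μ₁ q₁ γ₁ γ₂ γ : ℝ)
    (hk₁m : Measurable k₁) (hk₂m : Measurable k₂) (hUm : Measurable U)
    (hsm : Measurable s)
    (hk₁ : ∀ x, 0 ≤ k₁ x) (hk₂ : ∀ x, 0 ≤ k₂ x) (hU : ∀ x, 0 ≤ U x)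
    (hs0 : ∀ a, 0 ≤ s a) (hs1 : ∀ a, s a ≤ 1)
    (hμ₁ : 0 ≤ μ₁) (hq₁ : 0 ≤ q₁) (hγ₁ : 0 ≤ γ₁) (hγ₂ : 0 ≤ γ₂) (hγ : 0 ≤ γ)
    (R₀ : ℝ≥0∞)
    (hR₀ : R₀ =
      (∫⁻ x in Set.Ioi (0:ℝ), ENNReal.ofReal (k₂ x * U x * Real.exp (-γ * x)) *
        ∫⁻ y in Set.Ioc 0 x,
          ENNReal.ofReal (γ₁ * Real.exp ((γ - (γ₁ + γ₂)) * y)) *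
          ∫⁻ z in Set.Ioc 0 y,
            ENNReal.ofReal (q₁ * Real.exp (((γ₁ + γ₂) - (μ₁ + q₁)) * z)) *
            ∫⁻ a in Set.Ioc 0 z, ENNReal.ofReal (k₁ a * Real.exp ((μ₁ + q₁) * a))) +
      (∫⁻ x in Set.Ioi (0:ℝ), ENNReal.ofReal (k₂ x * U x * Real.exp (-γ * x)) *
        ∫⁻ z in Set.Ioc 0 x,
          ENNReal.ofReal (μ₁ * Real.exp ((γ - (μ₁ + q₁)) * z)) *
          ∫⁻ a in Set.Ioc 0 z, ENNReal.ofReal (k₁ a * Real.exp ((μ₁ + q₁) * a))))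
    (I : ℝ≥0∞)
    (hI : I =
      (∫⁻ a in Set.Ioi (0:ℝ),
        ENNReal.ofReal (s a * k₁ a * Real.exp ((μ₁ + q₁) * a)) *
        ∫⁻ z in Set.Ioi a,
          ENNReal.ofReal (q₁ * Real.exp (((γ₁ + γ₂) - (μ₁ + q₁)) * z)) *
          ∫⁻ y in Set.Ioi z,
            ENNReal.ofReal (γ₁ * Real.exp ((γ - (γ₁ + γ₂)) * y)) *
            ∫⁻ x in Set.Ioi y, ENNReal.ofReal (k₂ x * U x * Real.exp (-γ * x))) +
      (∫⁻ a in Set.Ioi (0:ℝ),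
        ENNReal.ofReal (s a * k₁ a * Real.exp ((μ₁ + q₁) * a)) *
        ∫⁻ z in Set.Ioi a,
          ENNReal.ofReal (μ₁ * Real.exp ((γ - (μ₁ + q₁)) * z)) *
          ∫⁻ x in Set.Ioi z, ENNReal.ofReal (k₂ x * U x * Real.exp (-γ * x)))) :
    I ≤ R₀ := by
  -- abbreviations
  set K₁ : ℝ → ℝ≥0∞ := fun a => ENNReal.ofReal (k₁ a * Real.exp ((μ₁ + q₁) * a)) with hK₁
  set K₂ : ℝ → ℝ≥0∞ := fun x => ENNReal.ofReal (k₂ x * U x * Real.exp (-γ * x)) with hK₂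
  set Q : ℝ → ℝ≥0∞ := fun z => ENNReal.ofReal (q₁ * Real.exp (((γ₁ + γ₂) - (μ₁ + q₁)) * z)) with hQ
  set G : ℝ → ℝ≥0∞ := fun y => ENNReal.ofReal (γ₁ * Real.exp ((γ - (γ₁ + γ₂)) * y)) with hG
  set M : ℝ → ℝ≥0∞ := fun z => ENNReal.ofReal (μ₁ * Real.exp ((γ - (μ₁ + q₁)) * z)) with hM
  set S : ℝ → ℝ≥0∞ := fun a => ENNReal.ofReal (s a * k₁ a * Real.exp ((μ₁ + q₁) * a)) with hS
  have hK₁m : Measurable K₁ :=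
    ENNReal.measurable_ofReal.comp (hk₁m.mul ((Real.measurable_exp).comp (measurable_const.mul measurable_id)))
  have hK₂m : Measurable K₂ :=
    ENNReal.measurable_ofReal.comp ((hk₂m.mul hUm).mul ((Real.measurable_exp).comp (measurable_const.mul measurable_id)))
  have hQm : Measurable Q :=
    ENNReal.measurable_ofReal.comp (measurable_const.mul ((Real.measurable_exp).comp (measurable_const.mul measurable_id)))
  have hGm : Measurable G :=
    ENNReal.measurable_ofReal.comp (measurable_const.mul ((Real.measurable_exp).comp (measurable_const.mul measurable_id)))
  have hMm : Measurable M :=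
    ENNReal.measurable_ofReal.comp (measurable_const.mul ((Real.measurable_exp).comp (measurable_const.mul measurable_id)))
  set F : ℝ → ℝ≥0∞ := fun y => ∫⁻ x in Set.Ioi y, K₂ x with hFdef
  set A : ℝ → ℝ≥0∞ := fun z => ∫⁻ a in Set.Ioc 0 z, K₁ a with hAdef
  have hFm : Measurable F := ioi_meas K₂
  have hAm : Measurable A := ioc_meas K₁
  set H : ℝ → ℝ≥0∞ := fun z => ∫⁻ y in Set.Ioi z, G y * F y with hHdef
  have hHm : Measurable H := ioi_meas _
  set B : ℝ → ℝ≥0∞ := fun y => ∫⁻ z in Set.Ioc 0 y, Q z * A z with hBdef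
  have hBm : Measurable B := ioc_meas _
  -- pointwise bound S ≤ K₁
  have hSK : ∀ a, S a ≤ K₁ a := by
    intro a
    apply ENNReal.ofReal_le_ofReal
    rw [mul_assoc]
    exact mul_le_of_le_one_left
      (mul_nonneg (hk₁ a) (Real.exp_nonneg _)) (hs1 a)
  -- Term 1
  have t1 : (∫⁻ a in Set.Ioi (0:ℝ), S a * ∫⁻ z in Set.Ioi a, Q z * H z)
      ≤ ∫⁻ x in Set.Ioi (0:ℝ), K₂ x * ∫⁻ y in Set.Ioc 0 x, G y * B y := by
    calc (∫⁻ a in Set.Ioi (0:ℝ), S a * ∫⁻ z in Set.Ioi a, Q z * H z)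
        ≤ ∫⁻ a in Set.Ioi (0:ℝ), K₁ a * ∫⁻ z in Set.Ioi a, Q z * H z :=
          lintegral_mono fun a => mul_le_mul' (hSK a) le_rfl
      _ = ∫⁻ z in Set.Ioi (0:ℝ), (Q z * H z) * A z :=
          swap_lem K₁ (fun z => Q z * H z) hK₁m (hQm.mul hHm)
      _ = ∫⁻ z in Set.Ioi (0:ℝ), (Q z * A z) * ∫⁻ y in Set.Ioi z, G y * F y := by
          refine lintegral_congr fun z => ?_
          rw [mul_right_comm]
      _ = ∫⁻ y in Set.Ioi (0:ℝ), (G y * F y) * B y :=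
          swap_lem (fun z => Q z * A z) (fun y => G y * F y) (hQm.mul hAm) (hGm.mul hFm)
      _ = ∫⁻ y in Set.Ioi (0:ℝ), (G y * B y) * ∫⁻ x in Set.Ioi y, K₂ x := by
          refine lintegral_congr fun y => ?_
          rw [mul_right_comm]
      _ = ∫⁻ x in Set.Ioi (0:ℝ), K₂ x * ∫⁻ y in Set.Ioc 0 x, G y * B y :=
          swap_lem (fun y => G y * B y) K₂ (hGm.mul hBm) hK₂m
  -- Term 2
  have t2 : (∫⁻ a in Set.Ioi (0:ℝ), S a * ∫⁻ z in Set.Ioi a, M z * F z)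
      ≤ ∫⁻ x in Set.Ioi (0:ℝ), K₂ x * ∫⁻ z in Set.Ioc 0 x, M z * A z := by
    calc (∫⁻ a in Set.Ioi (0:ℝ), S a * ∫⁻ z in Set.Ioi a, M z * F z)
        ≤ ∫⁻ a in Set.Ioi (0:ℝ), K₁ a * ∫⁻ z in Set.Ioi a, M z * F z :=
          lintegral_mono fun a => mul_le_mul' (hSK a) le_rfl
      _ = ∫⁻ z in Set.Ioi (0:ℝ), (M z * F z) * A z :=
          swap_lem K₁ (fun z => M z * F z) hK₁m (hMm.mul hFm)
      _ = ∫⁻ z in Set.Ioi (0:ℝ), (M z * A z) * ∫⁻ x in Set.Ioi z, K₂ x := by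
          refine lintegral_congr fun z => ?_
          rw [mul_right_comm]
      _ = ∫⁻ x in Set.Ioi (0:ℝ), K₂ x * ∫⁻ z in Set.Ioc 0 x, M z * A z :=
          swap_lem (fun z => M z * A z) K₂ (hMm.mul hAm) hK₂m
  rw [hI, hR₀]
  exact add_le_add t1 t2
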